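/- Let a, b, c be integers and set d := b² − 4ac. Then the following are equivalent: (i) there exist integers x, y with ax² + bxy + cy² = −1; (ii) the binary quadratic form ax² + bxy + cy² is GL(2,ℤ)-equivalent to the form −x² + (d/4)y² if b is even, and to the form −x² + xy + ((d−1)/4)y² if b is odd. Here GL(2,ℤ)-equivalence of two binary quadratic forms Q and Q' means that there exist integers p, q, r, s with ps − qr = ±1 such that Q(px + qy, rx + sy) = Q'(x, y) for all integers x, y. -/
import Mathlib


/-- A binary quadratic form `ax² + bxy + cy²` represents `-1` if and only if it
is `GL(2,ℤ)`-equivalent to `-x² + (d/4)y²` when `b` is even, and to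
`-x² + xy + ((d-1)/4)y²` when `b` is odd, where `d = b² - 4ac` is the
discriminant. -/
theorem represents_neg_one_iff_equiv (a b c d : ℤ) (hd : d = b ^ 2 - 4 * a * c) :
    (∃ x y : ℤ, a * x ^ 2 + b * x * y + c * y ^ 2 = -1) ↔
      (∃ p q r s : ℤ, (p * s - q * r = 1 ∨ p * s - q * r = -1) ∧
        ∀ x y : ℤ,
          a * (p * x + q * y) ^ 2 + b * (p * x + q * y) * (r * x + s * y) +
              c * (r * x + s * y) ^ 2 =
            if 2 ∣ b then -x ^ 2 + (d / 4) * y ^ 2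
            else -x ^ 2 + x * y + ((d - 1) / 4) * y ^ 2) := by
  constructor
  · rintro ⟨X, Y, hQ⟩
    have huv : (-(a*X + b*Y)) * X + (-(c*Y)) * Y = 1 := by linear_combination -hQ
    set u : ℤ := -(a*X + b*Y) with hu
    set v : ℤ := -(c*Y) with hv
    rcases Int.even_or_odd b with ⟨b', hb'⟩ | ⟨b', hb'⟩
    · -- even case: b = b' + b'
      set t : ℤ := b' + (-(a*X*v) - b*v*Y + c*Y*u) with ht
      set q : ℤ := -v + t*X with hq
      set s : ℤ := u + t*Y with hs
      refine ⟨X, q, Y, s, Or.inl (by rw [hq, hs]; linear_combination huv), ?_⟩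
      have hB' : 2*a*X*q + b*(X*s + q*Y) + 2*c*Y*s = 0 := by
        rw [hq, hs, ht]; linear_combination 2*t*hQ + b*huv + hb'
      set K : ℤ := a*q^2 + b*q*s + c*s^2 with hKdef
      have hK : d = 4 * K := by
        rw [hKdef]
        linear_combination hd - (b^2 - 4*a*c)*(u*X + v*Y + 1)*huv
          + (2*a*X*q + b*(X*s + q*Y) + 2*c*Y*s)*hB' - 4*(a*q^2 + b*q*s + c*s^2)*hQ
      intro x y
      have hdiv : d / 4 = K := by omega
      split_ifs with h2
      · rw [hdiv, hKdef]
        linear_combination x^2 * hQ + x*y*hB'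
      · omega
    · -- odd case: b = 2*b' + 1
      set t : ℤ := b' + (-(a*X*v) - b*v*Y + c*Y*u) with ht
      set q : ℤ := -v + t*X with hq
      set s : ℤ := u + t*Y with hs
      refine ⟨X, q, Y, s, Or.inl (by rw [hq, hs]; linear_combination huv), ?_⟩
      have hB' : 2*a*X*q + b*(X*s + q*Y) + 2*c*Y*s = 1 := by
        rw [hq, hs, ht]; linear_combination 2*t*hQ + b*huv + hb'
      set K : ℤ := a*q^2 + b*q*s + c*s^2 with hKdef
      have hK : d = 4 * K + 1 := by
        rw [hKdef]
        linear_combination hd - (b^2 - 4*a*c)*(u*X + v*Y + 1)*huv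
          + (2*a*X*q + b*(X*s + q*Y) + 2*c*Y*s + 1)*hB' - 4*(a*q^2 + b*q*s + c*s^2)*hQ
      intro x y
      have hdiv : (d - 1) / 4 = K := by omega
      split_ifs with h2
      · omega
      · rw [hdiv, hKdef]
        linear_combination x^2 * hQ + x*y*hB'
  · rintro ⟨p, q, r, s, _, h⟩
    refine ⟨p, r, ?_⟩
    have h10 := h 1 0
    split_ifs at h10 <;> linear_combination h10
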